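/- Every finite nilpotent group G of nilpotency class at most 2 and of odd order is Abelian representable: for every n and every family of subgroups G₁, …, Gₙ of G, there exist a finite abelian (additive) group A with |A| = |G| and subgroups A₁, …, Aₙ of A such that for every nonempty S ⊆ {1, …, n}, [G : ⋂_{i∈S} G_i] = [A : ⋂_{i∈S} A_i]. -/

import Mathlib

open scoped commutatorElement

section Baer
variable {G : Type*} [Group G]

variable (hc : ∀ a b g : G, Commute ⁅a, b⁆ g)

include hc

lemma baer_comm_mul_left (a b c : G) : ⁅a * b, c⁆ = ⁅a, c⁆ * ⁅b, c⁆ := by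
  have h1 : b * c = ⁅b, c⁆ * c * b := by group
  have : ⁅a * b, c⁆ = a * (b * c) * b⁻¹ * a⁻¹ * c⁻¹ := by
    simp [commutatorElement_def, mul_assoc]
  rw [h1] at this
  have h2 : a * (⁅b, c⁆ * c * b) * b⁻¹ * a⁻¹ * c⁻¹ = ⁅b, c⁆ * (a * c * a⁻¹ * c⁻¹) := by
    rw [show a * (⁅b, c⁆ * c * b) = a * ⁅b, c⁆ * (c * b) by group, ← (hc b c a).eq]
    group
  rw [this, h2]
  have h3 : a * c * a⁻¹ * c⁻¹ = ⁅a, c⁆ := by simp [commutatorElement_def, mul_assoc]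
  rw [h3, (hc b c _).eq]

lemma baer_comm_mul_right (a b c : G) : ⁅a, b * c⁆ = ⁅a, b⁆ * ⁅a, c⁆ := by
  have := baer_comm_mul_left hc b c a
  have h := congrArg (·⁻¹) this
  simp only [commutatorElement_inv, mul_inv_rev] at h
  rw [h, (hc a c _).eq]

variable {m : ℕ}

lemma baer_expand_left (a b c : G) :
    (a * b * ⁅b, a⁆ ^ m) * c * ⁅c, a * b * ⁅b, a⁆ ^ m⁆ ^ m
      = a * b * c * (⁅b, a⁆ ^ m * (⁅c, a⁆ ^ m * ⁅c, b⁆ ^ m)) := by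
  have h1 : ⁅c, a * b * ⁅b, a⁆ ^ m⁆ = ⁅c, a⁆ * ⁅c, b⁆ := by
    rw [baer_comm_mul_right hc c (a * b) (⁅b, a⁆ ^ m),
      commutatorElement_eq_one_iff_commute.mpr ((hc b a c).pow_left m).symm,
      mul_one, baer_comm_mul_right hc]
  rw [h1, (hc c a ⁅c, b⁆).mul_pow m,
    show (a * b * ⁅b, a⁆ ^ m) * c = a * b * (⁅b, a⁆ ^ m * c) by group,
    ((hc b a c).pow_left m).eq]
  group

lemma baer_expand_right (a b c : G) :
    a * (b * c * ⁅c, b⁆ ^ m) * ⁅b * c * ⁅c, b⁆ ^ m, a⁆ ^ m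
      = a * b * c * (⁅c, b⁆ ^ m * (⁅b, a⁆ ^ m * ⁅c, a⁆ ^ m)) := by
  have h1 : ⁅b * c * ⁅c, b⁆ ^ m, a⁆ = ⁅b, a⁆ * ⁅c, a⁆ := by
    rw [baer_comm_mul_left hc (b * c) (⁅c, b⁆ ^ m) a,
      show ⁅(⁅c, b⁆ ^ m : G), a⁆ = 1 from
        commutatorElement_eq_one_iff_commute.mpr ((hc c b a).pow_left m),
      mul_one, baer_comm_mul_left hc]
  rw [h1, (hc b a ⁅c, a⁆).mul_pow m]
  group

lemma baer_assoc (a b c : G) :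
    (a * b * ⁅b, a⁆ ^ m) * c * ⁅c, a * b * ⁅b, a⁆ ^ m⁆ ^ m
      = a * (b * c * ⁅c, b⁆ ^ m) * ⁅b * c * ⁅c, b⁆ ^ m, a⁆ ^ m := by
  rw [baer_expand_left hc, baer_expand_right hc]
  congr 1
  rw [((hc c b ((⁅b, a⁆:G) ^ m * ⁅c, a⁆ ^ m)).pow_left m).eq, mul_assoc]

lemma baer_comm (hm : ∀ g : G, g ^ m * g ^ m = g) (a b : G) :
    a * b * ⁅b, a⁆ ^ m = b * a * ⁅a, b⁆ ^ m := by
  have hab : a * b = ⁅a, b⁆ * (b * a) := by group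
  have key : ⁅a, b⁆ * ⁅b, a⁆ ^ m = ⁅a, b⁆ ^ m := by
    rw [← commutatorElement_inv a b, inv_pow]
    calc ⁅a, b⁆ * (⁅a, b⁆ ^ m)⁻¹ = (⁅a, b⁆ ^ m * ⁅a, b⁆ ^ m) * (⁅a, b⁆ ^ m)⁻¹ := by
          rw [hm]
      _ = ⁅a, b⁆ ^ m := by group
  rw [hab, (hc a b (b * a)).eq, mul_assoc (b * a), key]

/-- The Baer trick: an abelian group structure on a class-2 group of odd order. -/
def baerAddCommGroup (hm : ∀ g : G, g ^ m * g ^ m = g) : AddCommGroup G :=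
  letI : Zero G := ⟨1⟩
  letI : Add G := ⟨fun a b => a * b * ⁅b, a⁆ ^ m⟩
  letI : Neg G := ⟨fun a => a⁻¹⟩
  { add := (· + ·)
    zero := 0
    neg := (- ·)
    nsmul := nsmulRec
    zsmul := zsmulRec
    add_assoc := fun a b c => baer_assoc hc a b c
    zero_add := fun a => show 1 * a * ⁅a, (1:G)⁆ ^ m = a by simp
    add_zero := fun a => show a * 1 * ⁅(1:G), a⁆ ^ m = a by simp
    neg_add_cancel := fun a => show a⁻¹ * a * ⁅a, a⁻¹⁆ ^ m = 1 by simp [commutatorElement_def]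
    add_comm := fun a b => baer_comm hc hm a b }

lemma baerAdd_def (hm : ∀ g : G, g ^ m * g ^ m = g) (a b : G) :
    letI := baerAddCommGroup hc hm
    a + b = a * b * ⁅b, a⁆ ^ m := rfl

end Baer

section Baer2
variable {G : Type*} [Group G] {m : ℕ}
variable (hc : ∀ a b g : G, Commute ⁅a, b⁆ g) (hm : ∀ g : G, g ^ m * g ^ m = g)

/-- Every subgroup of `G` is an additive subgroup for the Baer structure. -/
def baerSubgroup (H : Subgroup G) :
    letI := baerAddCommGroup hc hm; AddSubgroup G :=
  letI := baerAddCommGroup hc hm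
  { carrier := H
    zero_mem' := H.one_mem
    add_mem' := fun {a b} ha hb => by
      show a * b * ⁅b, a⁆ ^ m ∈ H
      refine mul_mem (mul_mem ha hb) (pow_mem ?_ m)
      rw [commutatorElement_def]
      exact mul_mem (mul_mem (mul_mem hb ha) (inv_mem hb)) (inv_mem ha)
    neg_mem' := fun {a} ha => H.inv_mem ha }

lemma mem_baerSubgroup {H : Subgroup G} {x : G} :
    letI := baerAddCommGroup hc hm
    (x ∈ baerSubgroup hc hm H ↔ x ∈ H) := ⟨fun h => h, fun h => h⟩

lemma index_baerSubgroup [Finite G] (H : Subgroup G) :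
    letI := baerAddCommGroup hc hm
    ((baerSubgroup hc hm H).index = H.index) := by
  letI := baerAddCommGroup hc hm
  have h1 := AddSubgroup.index_mul_card (baerSubgroup hc hm H)
  have h2 := Subgroup.index_mul_card H
  have hcard : Nat.card (baerSubgroup hc hm H) = Nat.card H :=
    Nat.card_congr ⟨fun x => ⟨x.1, x.2⟩, fun x => ⟨x.1, x.2⟩, fun _ => rfl, fun _ => rfl⟩
  rw [hcard] at h1
  have hpos : 0 < Nat.card H := Nat.card_pos
  exact Nat.eq_of_mul_eq_mul_right hpos (h1.trans h2.symm)

end Baer2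


/-- Every finite nilpotent group of nilpotency class at most 2
(`lowerCentralSeries G 2 = ⊥`, i.e. `γ₃(G) = 1`) and of odd order is Abelian
representable: for every `n` and family of subgroups `G₁, …, Gₙ` of `G`, there are a
finite abelian group `A` with `|A| = |G|` and subgroups `A₁, …, Aₙ` of `A` with
`[G : ⋂_{i∈S} Gᵢ] = [A : ⋂_{i∈S} Aᵢ]` for every nonempty `S ⊆ {1,…,n}`. -/
theorem classTwo_oddOrder_abelianRepresentable
    (G : Type*) [Group G] [Finite G]
    (hclass : (⊤ : Subgroup G).lowerCentralSeries 2 = ⊥)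
    (hodd : Odd (Nat.card G))
    (n : ℕ) (Gs : Fin n → Subgroup G) :
    ∃ (A : Type) (_ : AddCommGroup A) (_ : Fintype A),
      Nat.card A = Nat.card G ∧
      ∃ As : Fin n → AddSubgroup A,
        ∀ S : Finset (Fin n), S.Nonempty →
          (⨅ i ∈ S, Gs i).index = (⨅ i ∈ S, As i).index := by
  -- commutators are central
  have hc : ∀ a b g : G, Commute ⁅a, b⁆ g := by
    intro a b g
    rw [← commutatorElement_eq_one_iff_commute, ← Subgroup.mem_bot, ← hclass]
    have h1 : ⁅a, b⁆ ∈ (⊤ : Subgroup G).lowerCentralSeries 1 := by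
      rw [show (1 : ℕ) = 0 + 1 from rfl, Subgroup.lowerCentralSeries_succ, Subgroup.lowerCentralSeries_zero]
      exact Subgroup.commutator_mem_commutator (Subgroup.mem_top a) (Subgroup.mem_top b)
    rw [show (2 : ℕ) = 1 + 1 from rfl, Subgroup.lowerCentralSeries_succ]
    exact Subgroup.commutator_mem_commutator h1 (Subgroup.mem_top g)
  -- the "halving" exponent
  obtain ⟨k, hk⟩ := hodd
  have hm : ∀ g : G, g ^ (k + 1) * g ^ (k + 1) = g := by
    intro g
    rw [← pow_add, show k + 1 + (k + 1) = (2 * k + 1) + 1 by omega, ← hk, pow_succ,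
      pow_card_eq_one', one_mul]
  letI instG : AddCommGroup G := baerAddCommGroup hc hm
  -- transfer to a `Type 0` copy
  haveI : Small.{0} G := ⟨⟨Fin (Nat.card G), ⟨Finite.equivFin G⟩⟩⟩
  haveI : Finite (Shrink.{0} G) := Finite.of_equiv G (equivShrink G)
  let e : Shrink.{0} G ≃ G := (equivShrink G).symm
  letI instA : AddCommGroup (Shrink.{0} G) := e.addCommGroup
  refine ⟨Shrink.{0} G, instA, Fintype.ofFinite _, Nat.card_congr e, ?_⟩
  -- the additive hom
  have hadd : ∀ a b : Shrink.{0} G, e (a + b) = e a + e b := fun a b =>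
    show e (e.symm (e a + e b)) = e a + e b from e.apply_symm_apply _
  let φ : Shrink.{0} G →+ G := AddMonoidHom.mk' e hadd
  have hφsurj : Function.Surjective φ := e.surjective
  refine ⟨fun i => (baerSubgroup hc hm (Gs i)).comap φ, fun S _ => ?_⟩
  have hiInf : (⨅ i ∈ S, (baerSubgroup hc hm (Gs i)).comap φ)
      = (baerSubgroup hc hm (⨅ i ∈ S, Gs i)).comap φ := by
    ext x
    simp only [AddSubgroup.mem_iInf, AddSubgroup.mem_comap, mem_baerSubgroup,
      Subgroup.mem_iInf]
  rw [hiInf, AddSubgroup.index_comap_of_surjective _ hφsurj, index_baerSubgroup]
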